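/- Let A be an n-dimensional nilpotent left Leibniz algebra over ℂ with dim A² = n − k, dim Leib(A) = 1, and dim A³ = t. Then n ≤ t + (k² + k + 2)/2. -/

import Mathlib

/-- The left Leibniz identity for a bilinear bracket:
`[a,[b,c]] = [[a,b],c] + [b,[a,c]]`. -/
def IsLeibnizBracket {K A : Type*} [CommRing K] [AddCommGroup A] [Module K A]
    (br : A →ₗ[K] A →ₗ[K] A) : Prop :=
  ∀ a b c : A, br a (br b c) = br (br a b) c + br b (br a c)

/-- The span of all brackets `[s,t]` with `s ∈ S`, `t ∈ T`. -/
def bracketSpan {K A : Type*} [CommRing K] [AddCommGroup A] [Module K A]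
    (br : A →ₗ[K] A →ₗ[K] A) (S T : Submodule K A) : Submodule K A :=
  Submodule.span K {x | ∃ s ∈ S, ∃ t ∈ T, br s t = x}

/-- Lower central series: `lcs br n = A^(n+1)`, i.e. `lcs br 0 = A¹ = A` and
`lcs br (n+1) = [A, lcs br n]`. -/
def lcs {K A : Type*} [CommRing K] [AddCommGroup A] [Module K A]
    (br : A →ₗ[K] A →ₗ[K] A) : ℕ → Submodule K A
  | 0 => ⊤
  | n + 1 => bracketSpan br ⊤ (lcs br n)

/-- `Leib(A)`: the span of all squares `[a,a]`. -/
def leibIdeal {K A : Type*} [CommRing K] [AddCommGroup A] [Module K A]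
    (br : A →ₗ[K] A →ₗ[K] A) : Submodule K A :=
  Submodule.span K {x | ∃ a : A, br a a = x}

/-- The center `Z(A) = {x : [a,x] = 0 = [x,a] for all a}`. -/
def leibnizCenter {K A : Type*} [CommRing K] [AddCommGroup A] [Module K A]
    (br : A →ₗ[K] A →ₗ[K] A) : Submodule K A where
  carrier := {x | ∀ a : A, br a x = 0 ∧ br x a = 0}
  add_mem' := by
    intro x y hx hy a
    constructor <;>
      simp [map_add, LinearMap.add_apply, (hx a).1, (hx a).2, (hy a).1, (hy a).2]
  zero_mem' := by
    intro a
    constructor <;> simp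
  smul_mem' := by
    intro c x hx a
    constructor <;>
      simp [map_smul, LinearMap.smul_apply, (hx a).1, (hx a).2]

/-- Two-sided ideal of a Leibniz algebra. -/
def IsLeibnizIdeal {K A : Type*} [CommRing K] [AddCommGroup A] [Module K A]
    (br : A →ₗ[K] A →ₗ[K] A) (I : Submodule K A) : Prop :=
  ∀ a : A, ∀ x ∈ I, br a x ∈ I ∧ br x a ∈ I


section AuxLemmas

lemma half_count_aux (k : ℕ) :
    2 * (Finset.univ.filter fun p : Fin k × Fin k => p.1 < p.2).card = k * k - k := by
  classical
  set s₁ := Finset.univ.filter fun p : Fin k × Fin k => p.1 < p.2 with hs₁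
  set s₂ := Finset.univ.filter fun p : Fin k × Fin k => p.2 < p.1 with hs₂
  have himg : s₂ = s₁.image Prod.swap := by
    ext p
    simp only [hs₁, hs₂, Finset.mem_image, Finset.mem_filter, Finset.mem_univ, true_and]
    constructor
    · intro h; exact ⟨p.swap, h, Prod.swap_swap p⟩
    · rintro ⟨q, hq, rfl⟩; exact hq
  have hcard : s₂.card = s₁.card := by
    rw [himg, Finset.card_image_of_injective _ Prod.swap_injective]
  have hdisj : Disjoint s₁ s₂ := by
    rw [Finset.disjoint_left]
    intro p hp1 hp2
    rw [hs₁, Finset.mem_filter] at hp1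
    rw [hs₂, Finset.mem_filter] at hp2
    exact absurd (hp1.2.trans hp2.2) (lt_irrefl _)
  have hunion : s₁ ∪ s₂ = (Finset.univ : Finset (Fin k)).offDiag := by
    ext p
    simp only [hs₁, hs₂, Finset.mem_union, Finset.mem_filter, Finset.mem_univ, true_and,
      Finset.mem_offDiag]
    exact lt_or_lt_iff_ne
  have := Finset.card_union_of_disjoint hdisj
  rw [hunion, Finset.offDiag_card, Finset.card_univ, Fintype.card_fin, hcard] at this
  omega

variable {A : Type*} [AddCommGroup A] [Module ℂ A]
variable (br : A →ₗ[ℂ] A →ₗ[ℂ] A)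

lemma bmem_aux {T : Submodule ℂ A} (a : A) {b : A} (hb : b ∈ T) :
    br a b ∈ bracketSpan br ⊤ T :=
  Submodule.subset_span ⟨a, trivial, b, hb, rfl⟩

/-- `[A², c] ⊆ A³`. -/
lemma sq_bracket_mem_aux (hbr : IsLeibnizBracket br) (c : A) :
    ∀ v ∈ lcs br 1, br v c ∈ lcs br 2 := by
  intro v hv
  induction hv using Submodule.span_induction with
  | mem x hx =>
    obtain ⟨s, -, u, -, rfl⟩ := hx
    have h := hbr s u c
    have h1 : br s (br u c) ∈ lcs br 2 := bmem_aux br s (bmem_aux br u trivial)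
    have h2 : br u (br s c) ∈ lcs br 2 := bmem_aux br u (bmem_aux br s trivial)
    have heq : br (br s u) c = br s (br u c) - br u (br s c) := by
      rw [h]; abel
    rw [heq]; exact sub_mem h1 h2
  | zero => simp
  | add x y hx hy ihx ihy => rw [map_add, LinearMap.add_apply]; exact add_mem ihx ihy
  | smul r x hx ih => rw [map_smul, LinearMap.smul_apply]; exact Submodule.smul_mem _ _ ih

lemma sym_mem_aux (a b : A) : br a b + br b a ∈ leibIdeal br := by
  have hsq : ∀ x : A, br x x ∈ leibIdeal br := fun x => Submodule.subset_span ⟨x, rfl⟩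
  have h : br a b + br b a = br (a+b) (a+b) - br a a - br b b := by
    simp [map_add, LinearMap.add_apply]; abel
  rw [h]
  exact sub_mem (sub_mem (hsq _) (hsq _)) (hsq _)

end AuxLemmas

/-- If `A` is an `n`-dimensional nilpotent left Leibniz algebra over `ℂ` with
`dim A² = n - k`, `dim Leib(A) = 1` and `dim A³ = t`, then
`n ≤ t + (k² + k + 2)/2`. -/
theorem dim_le_of_derived_codim
    {A : Type*} [AddCommGroup A] [Module ℂ A] [FiniteDimensional ℂ A]
    (br : A →ₗ[ℂ] A →ₗ[ℂ] A) (hbr : IsLeibnizBracket br)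
    (hnil : ∃ m : ℕ, lcs br m = ⊥)
    (n k t : ℕ) (hk : k ≤ n)
    (hdim : Module.finrank ℂ A = n)
    (hA2 : Module.finrank ℂ ↥(lcs br 1) = n - k)
    (hleib : Module.finrank ℂ ↥(leibIdeal br) = 1)
    (hA3 : Module.finrank ℂ ↥(lcs br 2) = t) :
    2 * n ≤ 2 * t + k ^ 2 + k + 2 := by
  classical
  clear hnil
  set V := lcs br 1 with hVdef
  set W := lcs br 2 with hWdef
  set L := leibIdeal br with hLdef
  have hW2 : W = bracketSpan br ⊤ V := rfl
  have hsqL : ∀ y : A, br y y ∈ L := fun y => Submodule.subset_span ⟨y, rfl⟩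
  -- dimension of the quotient
  have hq : Module.finrank ℂ (A ⧸ V) = k := by
    have h := V.finrank_quotient_add_finrank
    rw [hdim, hA2] at h; omega
  let b : Module.Basis (Fin k) ℂ (A ⧸ V) := Module.finBasisOfFinrankEq ℂ _ hq
  have hxex : ∀ i : Fin k, ∃ a : A, Submodule.Quotient.mk a = b i :=
    fun i => Submodule.Quotient.mk_surjective V (b i)
  choose x hx using hxex
  -- the lifts span A modulo V
  have htop : Submodule.span ℂ (Set.range x) ⊔ V = ⊤ := by
    rw [eq_top_iff]
    rintro a -
    have hcomp : V.mkQ ∘ x = ⇑b := funext fun i => by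
      rw [Function.comp_apply, Submodule.mkQ_apply, hx]
    have h1 : V.mkQ a ∈ Submodule.span ℂ (Set.range (V.mkQ ∘ x)) := by
      rw [hcomp, b.span_eq]; trivial
    rw [Set.range_comp, ← Submodule.map_span] at h1
    obtain ⟨y, hy, hxy⟩ := h1
    have hav : a - y ∈ V := by
      rw [← Submodule.ker_mkQ V, LinearMap.mem_ker, map_sub, hxy, sub_self]
    exact Submodule.mem_sup.2 ⟨y, hy, a - y, hav, by abel⟩
  -- the finite set of ordered brackets
  set T : Finset A :=
    (Finset.univ.filter fun p : Fin k × Fin k => p.1 < p.2).image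
      fun p => br (x p.1) (x p.2) with hTdef
  set N : Submodule ℂ A := Submodule.span ℂ (T : Set A) ⊔ L with hNdef
  have hTmem : ∀ i j : Fin k, i < j → br (x i) (x j) ∈ Submodule.span ℂ (T : Set A) :=
    fun i j hij => Submodule.subset_span (Finset.mem_coe.2 (Finset.mem_image.2
      ⟨(i, j), Finset.mem_filter.2 ⟨Finset.mem_univ _, hij⟩, rfl⟩))
  have claim1 : ∀ i j : Fin k, br (x i) (x j) ∈ N := by
    intro i j
    rcases lt_trichotomy i j with h | h | h
    · exact Submodule.mem_sup_left (hTmem i j h)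
    · subst h; exact Submodule.mem_sup_right (hsqL (x i))
    · have heq : br (x i) (x j)
          = (br (x i) (x j) + br (x j) (x i)) - br (x j) (x i) := by abel
      rw [heq]
      exact sub_mem (Submodule.mem_sup_right (sym_mem_aux br (x i) (x j)))
        (Submodule.mem_sup_left (hTmem j i h))
  have claim2 : ∀ a ∈ Submodule.span ℂ (Set.range x),
      ∀ c ∈ Submodule.span ℂ (Set.range x), br a c ∈ N := by
    intro a ha c hc
    induction ha, hc using Submodule.span_induction₂ with
    | mem_mem u v hu hv =>
      obtain ⟨i, rfl⟩ := hu
      obtain ⟨j, rfl⟩ := hv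
      exact claim1 i j
    | zero_left v hv => simp
    | zero_right u hu => simp
    | add_left u v w hu hv hw h1 h2 =>
      rw [map_add, LinearMap.add_apply]; exact add_mem h1 h2
    | add_right u v w hu hv hw h1 h2 =>
      rw [map_add]; exact add_mem h1 h2
    | smul_left r u v hu hv h =>
      rw [map_smul, LinearMap.smul_apply]; exact Submodule.smul_mem _ _ h
    | smul_right r u v hu hv h =>
      rw [map_smul]; exact Submodule.smul_mem _ _ h
  -- A² is contained in N ⊔ A³
  have hVle : V ≤ N ⊔ W := by
    rw [show V = bracketSpan br ⊤ (⊤ : Submodule ℂ A) from rfl]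
    refine Submodule.span_le.2 ?_
    rintro z ⟨s, -, u, -, rfl⟩
    obtain ⟨s₀, hs₀, s₁, hs₁, rfl⟩ :=
      Submodule.mem_sup.1 (htop ▸ (Submodule.mem_top : s ∈ ⊤))
    obtain ⟨u₀, hu₀, u₁, hu₁, rfl⟩ :=
      Submodule.mem_sup.1 (htop ▸ (Submodule.mem_top : u ∈ ⊤))
    have hexp : br (s₀ + s₁) (u₀ + u₁)
        = br s₀ u₀ + br s₀ u₁ + br s₁ (u₀ + u₁) := by
      simp only [map_add, LinearMap.add_apply]; abel
    rw [hexp]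
    have h00 : br s₀ u₀ ∈ N := claim2 s₀ hs₀ u₀ hu₀
    have h01 : br s₀ u₁ ∈ W := hW2 ▸ bmem_aux br s₀ hu₁
    have h1 : br s₁ (u₀ + u₁) ∈ W := sq_bracket_mem_aux br hbr (u₀ + u₁) s₁ hs₁
    exact add_mem (add_mem (Submodule.mem_sup_left h00) (Submodule.mem_sup_right h01))
      (Submodule.mem_sup_right h1)
  -- dimension count
  have hsup : ∀ P Q : Submodule ℂ A,
      Module.finrank ℂ ↥(P ⊔ Q) ≤ Module.finrank ℂ P + Module.finrank ℂ Q := by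
    intro P Q
    have := Submodule.finrank_sup_add_finrank_inf_eq P Q
    omega
  have h1 : Module.finrank ℂ V ≤ Module.finrank ℂ ↥(N ⊔ W) :=
    Submodule.finrank_mono hVle
  have h2 := hsup N W
  have h3 : Module.finrank ℂ N ≤ Module.finrank ℂ (Submodule.span ℂ (T : Set A)) + 1 := by
    rw [hNdef, ← hleib]; exact hsup _ _
  have h4 : Module.finrank ℂ (Submodule.span ℂ (T : Set A)) ≤ T.card :=
    finrank_span_finset_le_card T
  have h5 : T.card ≤ (Finset.univ.filter fun p : Fin k × Fin k => p.1 < p.2).card := by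
    rw [hTdef]; exact Finset.card_image_le
  have hc : 2 * (Finset.univ.filter fun p : Fin k × Fin k => p.1 < p.2).card = k * k - k :=
    half_count_aux k
  have hkk : k ≤ k * k := by
    rcases Nat.eq_zero_or_pos k with h | h
    · simp [h]
    · exact Nat.le_mul_of_pos_left k h
  rw [pow_two]
  omega
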